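/- arXiv:math/0302128 — 2 statements merged into one kernel-verified Lean document; each statement's English description precedes it below -/
import Mathlib

section
/- The index of Fredholm operators is locally constant on the space of Fredholm operators with the norm topology; in particular it is constant on connected components. -/
open ContinuousLinearMap Module

variable {H : Type*} [NormedAddCommGroup H] [InnerProductSpace ℂ H] [CompleteSpace H]

/-- A bounded operator is Fredholm if its kernel and cokernel are finite-dimensional. -/
def IsFredholm (A : H →L[ℂ] H) : Prop :=
  FiniteDimensional ℂ (LinearMap.ker (A : H →ₗ[ℂ] H)) ∧ FiniteDimensional ℂ (H ⧸ LinearMap.range (A : H →ₗ[ℂ] H))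

/-- The index of a Fredholm operator: `dim ker A - dim coker A`. -/
noncomputable def fredholmIndex (A : H →L[ℂ] H) : ℤ :=
  (finrank ℂ (LinearMap.ker (A : H →ₗ[ℂ] H)) : ℤ) - (finrank ℂ (H ⧸ LinearMap.range (A : H →ₗ[ℂ] H)) : ℤ)

set_option linter.unusedSectionVars false

noncomputable def pairMap (U V : Submodule ℂ H) (B : H →L[ℂ] H) : (U × V) →L[ℂ] H :=
  (B.comp U.subtypeL).comp (ContinuousLinearMap.fst ℂ U V) +
    V.subtypeL.comp (ContinuousLinearMap.snd ℂ U V)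

lemma pairMap_apply (U V : Submodule ℂ H) (B : H →L[ℂ] H) (x : U × V) :
    pairMap U V B x = B x.1 + x.2 := rfl

lemma key_index {K W V : Submodule ℂ H} (hKW : IsCompl K W)
    [FiniteDimensional ℂ K] [FiniteDimensional ℂ V] (B : H →L[ℂ] H)
    (hbij : Function.Bijective (pairMap W V B)) :
    _root_.IsFredholm B ∧ fredholmIndex B = (finrank ℂ K : ℤ) - (finrank ℂ V : ℤ) := by
  classical
  set e : (W × V) ≃ₗ[ℂ] H :=
    LinearEquiv.ofBijective ((pairMap W V B) : (W × V) →ₗ[ℂ] H) hbij with he_def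
  have he : ∀ (w : W) (v : V), e (w, v) = B w + v := fun w v => rfl
  set q : H →ₗ[ℂ] V := (LinearMap.snd ℂ W V) ∘ₗ (e.symm : H →ₗ[ℂ] (W × V)) with hq_def
  set p1 : H →ₗ[ℂ] W := (LinearMap.fst ℂ W V) ∘ₗ (e.symm : H →ₗ[ℂ] (W × V)) with hp1_def
  have hsymm : ∀ (w : W) (v : V), e.symm (B w + v) = (w, v) := by
    intro w v
    rw [← he w v]
    exact e.symm_apply_apply (w, v)
  have hq : ∀ (w : W) (v : V), q (B w + v) = v := by
    intro w v; simp [hq_def, hsymm w v]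
  have hp1 : ∀ (w : W) (v : V), p1 (B w + v) = w := by
    intro w v; simp [hp1_def, hsymm w v]
  have hdecomp : ∀ y : H, (B (p1 y) : H) + (q y : H) = y := by
    intro y
    have h1 : e (e.symm y) = y := e.apply_symm_apply y
    have h2 : e ((e.symm y).1, (e.symm y).2) = B ((e.symm y).1) + ((e.symm y).2 : H) :=
      he (e.symm y).1 (e.symm y).2
    simpa [hq_def, hp1_def] using (h2.symm.trans (by rw [Prod.mk.eta]; exact h1))
  set Bl : H →ₗ[ℂ] H := (B : H →ₗ[ℂ] H) with hBl_def
  set f : K →ₗ[ℂ] V := q ∘ₗ Bl ∘ₗ K.subtype with hf_def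
  set P : H →ₗ[ℂ] K := K.projectionOnto W hKW with hP_def
  have hPmem : ∀ x : H, x - (P x : H) ∈ W := by
    intro x
    have h : (K.projectionOnto W hKW x : H) + (W.projectionOnto K hKW.symm x : H) = x :=
      Submodule.projection_add_projection_eq_self hKW x
    have h2 : x - (P x : H) = (W.projectionOnto K hKW.symm x : H) :=
      sub_eq_of_eq_add' h.symm
    rw [h2]; exact Subtype.coe_prop _
  have hPleft : ∀ k : K, P (k : H) = k := fun k => Submodule.linearProjOfIsCompl_apply_left hKW k
  -- the map `k ↦ k - p1 (B k)` from `K` to `H`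
  set φ : K →ₗ[ℂ] H := K.subtype - W.subtype ∘ₗ p1 ∘ₗ Bl ∘ₗ K.subtype with hφ_def
  have hφ_apply : ∀ k : K, φ k = (k : H) - (p1 (B k) : H) := fun k => rfl
  -- f k = 0 → B (φ k) = 0
  have hφker : ∀ k : K, f k = 0 → B (φ k) = 0 := by
    intro k hk
    have hd := hdecomp (B k)
    have hqk : q (B (k : H)) = 0 := hk
    rw [hqk] at hd
    simp only [Submodule.coe_zero, add_zero] at hd
    rw [hφ_apply, map_sub, hd, sub_self]
  have hker_f : ∀ x : H, B x = 0 → f (P x) = 0 := by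
    intro x hx
    have hw : x - (P x : H) ∈ W := hPmem x
    have hBPx : B ((-⟨x - (P x : H), hw⟩ : W) : H) + ((0 : V) : H) = B (P x : H) := by
      simp only [Submodule.coe_neg, Submodule.coe_zero, add_zero, map_neg, map_sub, hx,
        zero_sub, neg_neg]
    show q (B (P x : H)) = 0
    rw [← hBPx, hq]
  -- the kernel equivalence
  have hBl_ker : ∀ x : H, x ∈ LinearMap.ker (B : H →ₗ[ℂ] H) ↔ B x = 0 := fun x => LinearMap.mem_ker
  set φ' : LinearMap.ker f →ₗ[ℂ] LinearMap.ker (B : H →ₗ[ℂ] H) :=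
    LinearMap.codRestrict (LinearMap.ker (B : H →ₗ[ℂ] H)) (φ ∘ₗ (LinearMap.ker f).subtype)
      (fun c => by
        rw [hBl_ker]
        exact hφker c.1 c.2) with hφ'_def
  have hφ'_inj : Function.Injective φ' := by
    intro a b hab
    have h1 : φ a.1 = φ b.1 := congrArg Subtype.val hab
    rw [hφ_apply, hφ_apply] at h1
    -- a.1 - b.1 ∈ K ∩ W hence zero
    have h2 : (a.1 : H) - (b.1 : H) = (p1 (B a.1) : H) - (p1 (B b.1) : H) :=
      sub_eq_sub_iff_sub_eq_sub.mp h1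
    have hmemK : (a.1 : H) - (b.1 : H) ∈ K := K.sub_mem a.1.2 b.1.2
    have hmemW : (a.1 : H) - (b.1 : H) ∈ W := by
      rw [h2]; exact W.sub_mem (Subtype.coe_prop _) (Subtype.coe_prop _)
    have h0 : (a.1 : H) - (b.1 : H) = 0 :=
      Submodule.disjoint_def.mp hKW.disjoint _ hmemK hmemW
    ext
    exact sub_eq_zero.mp h0
  have hφ'_surj : Function.Surjective φ' := by
    rintro ⟨x, hx⟩
    rw [hBl_ker] at hx
    have hfPx : f (P x) = 0 := hker_f x hx
    refine ⟨⟨P x, hfPx⟩, ?_⟩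
    ext
    show φ (P x) = x
    rw [hφ_apply]
    have hw : x - (P x : H) ∈ W := hPmem x
    have hB : B ((-⟨x - (P x : H), hw⟩ : W) : H) + ((0 : V) : H) = B (P x : H) := by
      simp only [Submodule.coe_neg, Submodule.coe_zero, add_zero, map_neg, map_sub, hx,
        zero_sub, neg_neg]
    have hp1x : p1 (B (P x : H)) = -⟨x - (P x : H), hw⟩ := by rw [← hB, hp1]
    rw [hp1x]
    push_cast
    abel
  have eker : (LinearMap.ker f) ≃ₗ[ℂ] (LinearMap.ker (B : H →ₗ[ℂ] H)) :=
    LinearEquiv.ofBijective φ' ⟨hφ'_inj, hφ'_surj⟩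
  -- cokernel part
  have hqB0 : ∀ w : W, q (B (w : H)) = 0 := by
    intro w
    have : B (w : H) = B (w : H) + ((0 : V) : H) := by simp
    rw [this, hq]
  have hqV : ∀ v : V, q (v : H) = v := by
    intro v
    have : (v : H) = B ((0 : W) : H) + (v : H) := by simp
    rw [this, hq]
  have hle : LinearMap.range (B : H →ₗ[ℂ] H) ≤ (LinearMap.range f).comap q := by
    rintro y ⟨x, rfl⟩
    have hw : x - (P x : H) ∈ W := hPmem x
    have hsum : (P x : H) + ((⟨x - (P x : H), hw⟩ : W) : H) = x := by
      show (P x : H) + (x - (P x : H)) = x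
      exact add_sub_cancel _ _
    have hx : B x = B (P x : H) + B ((⟨x - (P x : H), hw⟩ : W) : H) := by
      rw [← map_add, hsum]
    show q (B x) ∈ LinearMap.range f
    rw [hx, map_add, hqB0, add_zero]
    exact ⟨P x, rfl⟩
  set g : (H ⧸ LinearMap.range (B : H →ₗ[ℂ] H)) →ₗ[ℂ] (V ⧸ LinearMap.range f) :=
    Submodule.mapQ (LinearMap.range (B : H →ₗ[ℂ] H)) (LinearMap.range f) q hle with hg_def
  have hg_apply : ∀ x : H, g (Submodule.Quotient.mk x) = Submodule.Quotient.mk (q x) :=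
    fun x => rfl
  have hg_surj : Function.Surjective g := by
    intro z
    obtain ⟨v, rfl⟩ := Submodule.Quotient.mk_surjective _ z
    exact ⟨Submodule.Quotient.mk (v : H), by rw [hg_apply, hqV]⟩
  have hg_inj : Function.Injective g := by
    rw [← LinearMap.ker_eq_bot, LinearMap.ker_eq_bot']
    intro m hm
    obtain ⟨x, rfl⟩ := Submodule.Quotient.mk_surjective _ m
    rw [hg_apply] at hm
    have hqx : q x ∈ LinearMap.range f := (Submodule.Quotient.mk_eq_zero _).mp hm
    obtain ⟨k, hk⟩ := hqx
    rw [Submodule.Quotient.mk_eq_zero]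
    -- x = B (p1 x) + q x and q x = f k = B k - B (p1 (B k))
    have h1 : (B (p1 x) : H) + (q x : H) = x := hdecomp x
    have h2 : (B (p1 (B (k : H))) : H) + (q (B (k : H)) : H) = B (k : H) := hdecomp (B (k : H))
    have hfk : (q x : H) = (q (B (k : H)) : H) := by rw [← hk]; rfl
    refine ⟨(p1 x : H) + (k : H) - (p1 (B (k : H)) : H), ?_⟩
    rw [map_sub, map_add]
    rw [hfk] at h1
    have h3 : (q (B (k : H)) : H) = B (k : H) - B ((p1 (B (k : H)) : H)) :=
      eq_sub_of_add_eq' h2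
    rw [h3] at h1
    rw [add_sub_assoc]
    exact h1
  have ecoker : (H ⧸ LinearMap.range (B : H →ₗ[ℂ] H)) ≃ₗ[ℂ] (V ⧸ LinearMap.range f) :=
    LinearEquiv.ofBijective g ⟨hg_inj, hg_surj⟩
  -- finiteness and index computation
  haveI hfin1 : FiniteDimensional ℂ (LinearMap.ker (B : H →ₗ[ℂ] H)) := Module.Finite.equiv eker
  haveI : FiniteDimensional ℂ (V ⧸ LinearMap.range f) := by infer_instance
  haveI hfin2 : FiniteDimensional ℂ (H ⧸ LinearMap.range (B : H →ₗ[ℂ] H)) := Module.Finite.equiv ecoker.symm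
  refine ⟨⟨hfin1, hfin2⟩, ?_⟩
  have h1 : finrank ℂ (LinearMap.ker f) = finrank ℂ (LinearMap.ker (B : H →ₗ[ℂ] H)) := eker.finrank_eq
  have h2 : finrank ℂ (H ⧸ LinearMap.range (B : H →ₗ[ℂ] H)) = finrank ℂ (V ⧸ LinearMap.range f) :=
    ecoker.finrank_eq
  have h3 : finrank ℂ (V ⧸ LinearMap.range f) + finrank ℂ (LinearMap.range f) = finrank ℂ V :=
    Submodule.finrank_quotient_add_finrank _
  have h4 : finrank ℂ (LinearMap.range f) + finrank ℂ (LinearMap.ker f) = finrank ℂ K :=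
    LinearMap.finrank_range_add_finrank_ker f
  rw [fredholmIndex]
  rw [← h1, h2]
  omega

lemma isClosed_range_of_fd_quotient (A : H →L[ℂ] H)
    (hcoker : FiniteDimensional ℂ (H ⧸ LinearMap.range (A : H →ₗ[ℂ] H))) :
    IsClosed ((LinearMap.range (A : H →ₗ[ℂ] H) : Submodule ℂ H) : Set H) := by
  classical
  set R := LinearMap.range (A : H →ₗ[ℂ] H) with hR_def
  set n := finrank ℂ (H ⧸ R) with hn_def
  set b := Module.finBasis ℂ (H ⧸ R) with hb_def
  have hmk := Submodule.Quotient.mk_surjective R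
  choose v hv using fun i : Fin n => hmk (b i)
  set Lc : (Fin n → ℂ) →L[ℂ] H :=
    LinearMap.toContinuousLinearMap (Fintype.linearCombination ℂ v) with hLc_def
  have hLc_apply : ∀ c : Fin n → ℂ, Lc c = ∑ i, c i • v i := fun c =>
    Fintype.linearCombination_apply ℂ v c
  set T : (H × (Fin n → ℂ)) →L[ℂ] H :=
    A.comp (ContinuousLinearMap.fst ℂ H (Fin n → ℂ)) +
      Lc.comp (ContinuousLinearMap.snd ℂ H (Fin n → ℂ)) with hT_def
  have hT : ∀ (x : H) (c : Fin n → ℂ), T (x, c) = A x + Lc c := fun x c => rfl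
  have hmkLc : ∀ c : Fin n → ℂ, R.mkQ (Lc c) = ∑ i, c i • b i := by
    intro c
    rw [hLc_apply, map_sum]
    refine Finset.sum_congr rfl fun i _ => ?_
    rw [map_smul]
    congr 1
    exact hv i
  have hTsurj : Function.Surjective T := by
    intro y
    set c : Fin n → ℂ := fun i => b.repr (R.mkQ y) i with hc_def
    have hc : R.mkQ (y - Lc c) = 0 := by
      rw [map_sub, hmkLc, sub_eq_zero]
      exact (b.sum_repr (R.mkQ y)).symm
    rw [Submodule.mkQ_apply, Submodule.Quotient.mk_eq_zero] at hc
    obtain ⟨x, hx⟩ := hc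
    exact ⟨(x, c), by rw [hT, show A x = y - Lc c from hx]; abel⟩
  set S : Submodule ℂ (Fin n → ℂ) := R.comap (Lc : (Fin n → ℂ) →ₗ[ℂ] H) with hS_def
  have hpre : T ⁻¹' (R : Set H) = (Set.univ : Set H) ×ˢ (S : Set (Fin n → ℂ)) := by
    ext ⟨x, c⟩
    simp only [Set.mem_preimage, Set.mem_prod, Set.mem_univ, true_and, SetLike.mem_coe, hT]
    exact Submodule.add_mem_iff_right R (LinearMap.mem_range_self (A : H →ₗ[ℂ] H) x)
  have hclosed_pre : IsClosed (T ⁻¹' (R : Set H)) := by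
    rw [hpre]
    exact isClosed_univ.prod (Submodule.closed_of_finiteDimensional S)
  rw [← isOpen_compl_iff]
  have himg : ((R : Set H))ᶜ = T '' (T ⁻¹' ((R : Set H))ᶜ) := by
    ext y
    constructor
    · intro hy
      obtain ⟨z, rfl⟩ := hTsurj y
      exact ⟨z, hy, rfl⟩
    · rintro ⟨z, hz, rfl⟩
      exact hz
  rw [himg]
  exact T.isOpenMap hTsurj _ hclosed_pre.isOpen_compl

lemma fredholm_stability (A : H →L[ℂ] H) (hA : _root_.IsFredholm A) :
    ∃ ε > (0 : ℝ), ∀ B : H →L[ℂ] H, ‖B - A‖ < ε →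
      _root_.IsFredholm B ∧ fredholmIndex B = fredholmIndex A := by
  classical
  obtain ⟨hker, hcoker⟩ := hA
  set K := LinearMap.ker (A : H →ₗ[ℂ] H) with hK_def
  set R := LinearMap.range (A : H →ₗ[ℂ] H) with hR_def
  haveI : FiniteDimensional ℂ K := hker
  haveI : CompleteSpace K := FiniteDimensional.complete ℂ K
  have hRclosed : IsClosed (R : Set H) := isClosed_range_of_fd_quotient A hcoker
  haveI : CompleteSpace R := hRclosed.completeSpace_coe
  have hcK : IsCompl K Kᗮ := K.isCompl_orthogonal_of_hasOrthogonalProjection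
  have hcR : IsCompl R Rᗮ := R.isCompl_orthogonal_of_hasOrthogonalProjection
  haveI : FiniteDimensional ℂ (Rᗮ : Submodule ℂ H) :=
    Module.Finite.equiv (Submodule.quotientEquivOfIsCompl R Rᗮ hcR)
  haveI : CompleteSpace (Kᗮ : Submodule ℂ H) := K.isClosed_orthogonal.completeSpace_coe
  haveI : CompleteSpace (Rᗮ : Submodule ℂ H) := R.isClosed_orthogonal.completeSpace_coe
  -- bijectivity of `pairMap Kᗮ Rᗮ A`
  have hAinj : Function.Injective ⇑(pairMap Kᗮ Rᗮ A) := by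
    rw [injective_iff_map_eq_zero]
    rintro ⟨w, v⟩ h
    rw [pairMap_apply] at h
    have hAw : A (w : H) = -(v : H) := eq_neg_of_add_eq_zero_left h
    have hvR : -(v : H) ∈ R := by rw [← hAw]; exact LinearMap.mem_range_self (A : H →ₗ[ℂ] H) (w : H)
    have hv0 : (v : H) = 0 := Submodule.disjoint_def.mp hcR.disjoint _ (neg_mem_iff.mp hvR) v.2
    have hw0 : (w : H) = 0 := by
      have hwK : (w : H) ∈ K :=
        LinearMap.mem_ker.mpr (show A (w : H) = 0 by rw [hAw, hv0, neg_zero])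
      exact Submodule.disjoint_def.mp hcK.disjoint _ hwK w.2
    simp [Prod.ext_iff, Subtype.ext_iff, hv0, hw0]
  have hAsurj : Function.Surjective ⇑(pairMap Kᗮ Rᗮ A) := by
    intro y
    have hy : (R.projectionOnto Rᗮ hcR y : H) + (Rᗮ.projectionOnto R hcR.symm y : H) = y :=
      Submodule.projection_add_projection_eq_self hcR y
    set r := R.projectionOnto Rᗮ hcR y
    set v := Rᗮ.projectionOnto R hcR.symm y
    obtain ⟨x, hx⟩ := r.2
    have hxd : (K.projectionOnto Kᗮ hcK x : H) + (Kᗮ.projectionOnto K hcK.symm x : H) = x :=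
      Submodule.projection_add_projection_eq_self hcK x
    set k := K.projectionOnto Kᗮ hcK x
    set w := Kᗮ.projectionOnto K hcK.symm x
    refine ⟨(w, v), ?_⟩
    rw [pairMap_apply]
    have hAk : A (k : H) = 0 := k.2
    have hAw : A (w : H) = A x := by
      conv_rhs => rw [← hxd]
      rw [map_add, hAk, zero_add]
    rw [hAw, show A x = (r : H) from hx, hy]
  have hAbij : Function.Bijective ⇑(pairMap Kᗮ Rᗮ A) := ⟨hAinj, hAsurj⟩
  set eA : ((Kᗮ : Submodule ℂ H) × (Rᗮ : Submodule ℂ H)) ≃L[ℂ] H :=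
    ContinuousLinearEquiv.ofBijective (pairMap Kᗮ Rᗮ A)
      (LinearMap.ker_eq_bot.mpr hAinj) (LinearMap.range_eq_top.mpr hAsurj) with heA_def
  have heA_apply : ∀ x, eA x = pairMap Kᗮ Rᗮ A x := fun x => rfl
  set c := ‖(eA.symm : H →L[ℂ] ((Kᗮ : Submodule ℂ H) × (Rᗮ : Submodule ℂ H)))‖ with hc_def
  have hc0 : 0 ≤ c := by
    rw [hc_def]
    exact norm_nonneg ((eA.symm : H →L[ℂ] ((Kᗮ : Submodule ℂ H) × (Rᗮ : Submodule ℂ H))))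
  refine ⟨(c + 1)⁻¹, by positivity, fun B hB => ?_⟩
  have hdiffnorm : ‖pairMap Kᗮ Rᗮ A - pairMap Kᗮ Rᗮ B‖ ≤ ‖B - A‖ := by
    refine ContinuousLinearMap.opNorm_le_bound _ (norm_nonneg _) fun x => ?_
    have hx : (pairMap Kᗮ Rᗮ A - pairMap Kᗮ Rᗮ B) x = (A - B) (x.1 : H) := by
      simp only [ContinuousLinearMap.sub_apply, pairMap_apply]
      abel
    rw [hx]
    calc ‖(A - B) (x.1 : H)‖ ≤ ‖A - B‖ * ‖(x.1 : H)‖ := (A - B).le_opNorm _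
      _ = ‖B - A‖ * ‖x.1‖ := by rw [norm_sub_rev]; rfl
      _ ≤ ‖B - A‖ * ‖x‖ := by
          exact mul_le_mul_of_nonneg_left (norm_fst_le x) (norm_nonneg _)
  set t := (eA.symm : H →L[ℂ] ((Kᗮ : Submodule ℂ H) × (Rᗮ : Submodule ℂ H))).comp
      (pairMap Kᗮ Rᗮ A - pairMap Kᗮ Rᗮ B) with ht_def
  have ht : ‖t‖ < 1 := by
    calc ‖t‖ ≤ c * ‖pairMap Kᗮ Rᗮ A - pairMap Kᗮ Rᗮ B‖ :=
          ContinuousLinearMap.opNorm_comp_le _ _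
      _ ≤ c * ‖B - A‖ := mul_le_mul_of_nonneg_left hdiffnorm hc0
      _ ≤ c * (c + 1)⁻¹ := mul_le_mul_of_nonneg_left hB.le hc0
      _ < 1 := by
          rw [← div_eq_mul_inv]
          exact (div_lt_one (by positivity)).mpr (by linarith)
  set u := Units.oneSub t ht with hu_def
  have hu_val : (u : ((Kᗮ : Submodule ℂ H) × (Rᗮ : Submodule ℂ H)) →L[ℂ] ((Kᗮ : Submodule ℂ H) × (Rᗮ : Submodule ℂ H))) = 1 - t := rfl
  have hu_eq : ∀ x, ((1 : ((Kᗮ : Submodule ℂ H) × (Rᗮ : Submodule ℂ H)) →L[ℂ] ((Kᗮ : Submodule ℂ H) × (Rᗮ : Submodule ℂ H))) - t) x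
      = eA.symm (pairMap Kᗮ Rᗮ B x) := by
    intro x
    simp only [ContinuousLinearMap.sub_apply, ContinuousLinearMap.one_apply,
      ContinuousLinearMap.coe_comp', Function.comp_apply, ht_def, map_sub,
      ContinuousLinearEquiv.coe_coe]
    rw [← heA_apply x, eA.symm_apply_apply]
    abel
  have hu_bij : Function.Bijective ⇑(u : ((Kᗮ : Submodule ℂ H) × (Rᗮ : Submodule ℂ H)) →L[ℂ] ((Kᗮ : Submodule ℂ H) × (Rᗮ : Submodule ℂ H))) := by
    refine Function.bijective_iff_has_inverse.mpr
      ⟨⇑((u⁻¹ : (((Kᗮ : Submodule ℂ H) × (Rᗮ : Submodule ℂ H)) →L[ℂ] ((Kᗮ : Submodule ℂ H) × (Rᗮ : Submodule ℂ H)))ˣ) : ((Kᗮ : Submodule ℂ H) × (Rᗮ : Submodule ℂ H)) →L[ℂ] ((Kᗮ : Submodule ℂ H) × (Rᗮ : Submodule ℂ H))), fun x => ?_, fun x => ?_⟩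
    · rw [← ContinuousLinearMap.mul_apply, u.inv_mul]
      rfl
    · rw [← ContinuousLinearMap.mul_apply, u.mul_inv]
      rfl
  have hbijB : Function.Bijective ⇑(pairMap Kᗮ Rᗮ B) := by
    have hfun : ⇑(pairMap Kᗮ Rᗮ B)
        = ⇑eA ∘ ⇑(u : ((Kᗮ : Submodule ℂ H) × (Rᗮ : Submodule ℂ H)) →L[ℂ] ((Kᗮ : Submodule ℂ H) × (Rᗮ : Submodule ℂ H))) := by
      funext x
      rw [Function.comp_apply, hu_val, hu_eq x, eA.apply_symm_apply]
    rw [hfun]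
    exact eA.bijective.comp hu_bij
  obtain ⟨hFB, hIdxB⟩ := key_index hcK B hbijB
  obtain ⟨_, hIdxA⟩ := key_index hcK A hAbij
  exact ⟨hFB, hIdxB.trans hIdxA.symm⟩

/-- The index is locally constant on the space of Fredholm operators (with the norm
topology), and in particular constant on connected components. -/
theorem fredholmIndex_isLocallyConstant :
    IsLocallyConstant (fun A : {A : H →L[ℂ] H // _root_.IsFredholm A} => fredholmIndex A.1) ∧
    ∀ A B : {A : H →L[ℂ] H // _root_.IsFredholm A}, B ∈ connectedComponent A →
      fredholmIndex B.1 = fredholmIndex A.1 := by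
  have h1 : IsLocallyConstant (fun A : {A : H →L[ℂ] H // _root_.IsFredholm A} => fredholmIndex A.1) := by
    rw [IsLocallyConstant.iff_exists_open]
    intro A
    obtain ⟨ε, hε, hstab⟩ := fredholm_stability A.1 A.2
    refine ⟨{B : {A : H →L[ℂ] H // _root_.IsFredholm A} | ‖B.1 - A.1‖ < ε}, ?_, by simpa, fun B hB => ?_⟩
    · have hset : {B : {A : H →L[ℂ] H // _root_.IsFredholm A} | ‖B.1 - A.1‖ < ε}
          = (fun B : {A : H →L[ℂ] H // _root_.IsFredholm A} => B.1) ⁻¹' Metric.ball A.1 ε := by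
        ext B
        simp [Metric.mem_ball, dist_eq_norm, Subtype.dist_eq]
      rw [hset]
      exact Metric.isOpen_ball.preimage continuous_subtype_val
    · exact (hstab B.1 hB).2
  refine ⟨h1, fun A B hB => ?_⟩
  exact h1.apply_eq_of_isPreconnected isPreconnected_connectedComponent hB mem_connectedComponent
end

section
/- The space of essentially positive self-adjoint Fredholm operators on a complex Hilbert space (self-adjoint Fredholm operators with only finitely many negative eigenvalues, counted with multiplicity) is a convex-like contractible subspace: it is contractible in the norm topology. -/
set_option linter.unusedSectionVars false
set_option linter.unusedVariables false
set_option maxHeartbeats 1000000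


open ContinuousLinearMap Module

variable {H : Type*} [NormedAddCommGroup H] [InnerProductSpace ℂ H] [CompleteSpace H]

/-- A self-adjoint operator is essentially positive if it has only finitely many
negative eigenvalues counted with multiplicity: there is a uniform bound on the
dimension of subspaces on which the associated quadratic form is negative definite. -/
def EssentiallyPositive (A : H →L[ℂ] H) : Prop :=
  ∃ n : ℕ, ∀ V : Submodule ℂ H,
    (∀ v ∈ V, v ≠ 0 → ((inner ℂ (A v) v : ℂ)).re < 0) →
    FiniteDimensional ℂ V ∧ finrank ℂ V ≤ n


lemma orthonormal_snoc {m : ℕ} {w : Fin m → H} (hw : Orthonormal ℂ w) {y : H}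
    (hy : ‖y‖ = 1) (ho : ∀ i, (inner ℂ (w i) y : ℂ) = 0) :
    Orthonormal ℂ (Fin.snoc w y : Fin (m + 1) → H) := by
  constructor
  · intro i
    rcases Fin.eq_castSucc_or_eq_last i with ⟨j, rfl⟩ | rfl
    · simpa using hw.1 j
    · simpa using hy
  · intro i j hij
    rcases Fin.eq_castSucc_or_eq_last i with ⟨i', rfl⟩ | rfl <;>
      rcases Fin.eq_castSucc_or_eq_last j with ⟨j', rfl⟩ | rfl
    · have : i' ≠ j' := fun h => hij (by rw [h])
      simpa using hw.2 this
    · simpa using ho i'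
    · simpa using (inner_eq_zero_symm).mp (ho j')
    · exact absurd rfl hij

/-- There is a finite orthonormal family orthogonal to which `B` is bounded below. -/
lemma exists_orthonormal_bddBelow (B : H →L[ℂ] H) {s : ℝ} (hs : 0 < s) (n : ℕ)
    (hN : ∀ V : Submodule ℂ H,
      (∀ v ∈ V, v ≠ 0 → ((inner ℂ (B v) v : ℂ)).re < s * ‖v‖ ^ 2) → finrank ℂ V ≤ n) :
    ∃ (m : ℕ) (w : Fin m → H), Orthonormal ℂ w ∧ ∃ c : ℝ, 0 < c ∧
      ∀ u : H, (∀ i, (inner ℂ (w i) u : ℂ) = 0) → c * ‖u‖ ≤ ‖B u‖ := by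
  by_contra hcon
  push_neg at hcon
  set ε : ℝ := s / (n + 2) with hε_def
  have hε : 0 < ε := by positivity
  have build : ∀ m : ℕ, ∃ w : Fin m → H, Orthonormal ℂ w ∧ ∀ i, ‖B (w i)‖ < ε := by
    intro m
    induction m with
    | zero =>
      exact ⟨fun i => i.elim0, ⟨fun i => i.elim0, fun i => i.elim0⟩, fun i => i.elim0⟩
    | succ m ih =>
      obtain ⟨w, hw, hbw⟩ := ih
      obtain ⟨u, hu_orth, hu⟩ := hcon m w hw ε hε
      have hu0 : u ≠ 0 := by
        intro h
        rw [h] at hu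
        simp at hu
      have hnu : 0 < ‖u‖ := norm_pos_iff.mpr hu0
      refine ⟨Fin.snoc w (‖u‖⁻¹ • u), orthonormal_snoc hw (norm_smul_inv_norm hu0) ?_, ?_⟩
      · intro i
        rw [RCLike.real_smul_eq_coe_smul (K := ℂ), inner_smul_right, hu_orth i, mul_zero]
      · intro i
        rcases Fin.eq_castSucc_or_eq_last i with ⟨j, rfl⟩ | rfl
        · simpa using hbw j
        · have : B (‖u‖⁻¹ • u) = ‖u‖⁻¹ • B u := B.map_smul_of_tower _ _
          rw [Fin.snoc_last, this, norm_smul]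
          have h1 : ‖(‖u‖⁻¹ : ℝ)‖ = ‖u‖⁻¹ := by
            rw [Real.norm_eq_abs, abs_of_pos (by positivity)]
          rw [h1]
          calc ‖u‖⁻¹ * ‖B u‖ < ‖u‖⁻¹ * (ε * ‖u‖) := by
                exact mul_lt_mul_of_pos_left hu (by positivity)
            _ = ε := by field_simp
  obtain ⟨w, hw, hbw⟩ := build (n + 1)
  set V : Submodule ℂ H := Submodule.span ℂ (Set.range w) with hV
  have hVneg : ∀ v ∈ V, v ≠ 0 → ((inner ℂ (B v) v : ℂ)).re < s * ‖v‖ ^ 2 := by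
    intro v hv hv0
    obtain ⟨c, hc⟩ := (Submodule.mem_span_range_iff_exists_fun ℂ).mp hv
    have hci : ∀ i, ‖c i‖ ≤ ‖v‖ := by
      intro i
      have : (inner ℂ (w i) v : ℂ) = c i := by
        rw [← hc]; exact hw.inner_right_fintype c i
      calc ‖c i‖ = ‖(inner ℂ (w i) v : ℂ)‖ := by rw [this]
        _ ≤ ‖w i‖ * ‖v‖ := norm_inner_le_norm _ _
        _ = ‖v‖ := by rw [hw.1 i, one_mul]
    have hBv : ‖B v‖ ≤ (n + 1) * (ε * ‖v‖) := by
      have : B v = ∑ i, c i • B (w i) := by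
        rw [← hc, map_sum]; simp
      rw [this]
      calc ‖∑ i, c i • B (w i)‖ ≤ ∑ i, ‖c i • B (w i)‖ := norm_sum_le _ _
        _ ≤ ∑ _i : Fin (n + 1), ε * ‖v‖ := by
            refine Finset.sum_le_sum fun i _ => ?_
            rw [norm_smul]
            calc ‖c i‖ * ‖B (w i)‖ ≤ ‖v‖ * ε := by
                  refine mul_le_mul (hci i) (hbw i).le (norm_nonneg _) (norm_nonneg _)
              _ = ε * ‖v‖ := mul_comm _ _
        _ = (n + 1) * (ε * ‖v‖) := by simp [Finset.sum_const, Finset.card_univ]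
    have hre : ((inner ℂ (B v) v : ℂ)).re ≤ ‖B v‖ * ‖v‖ := by
      calc ((inner ℂ (B v) v : ℂ)).re ≤ ‖(inner ℂ (B v) v : ℂ)‖ := Complex.re_le_norm _
        _ ≤ ‖B v‖ * ‖v‖ := norm_inner_le_norm _ _
    have hnv : 0 < ‖v‖ := norm_pos_iff.mpr hv0
    have : ‖B v‖ * ‖v‖ < s * ‖v‖ ^ 2 := by
      have h2 : ((n : ℝ) + 1) * ε < s := by
        rw [hε_def, ← mul_div_assoc]
        rw [div_lt_iff₀ (by positivity : (0:ℝ) < (n:ℝ) + 2)]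
        nlinarith
      calc ‖B v‖ * ‖v‖ ≤ ((n + 1) * (ε * ‖v‖)) * ‖v‖ :=
            mul_le_mul_of_nonneg_right hBv (norm_nonneg _)
        _ = (((n : ℝ) + 1) * ε) * ‖v‖ ^ 2 := by ring
        _ < s * ‖v‖ ^ 2 := mul_lt_mul_of_pos_right h2 (by positivity)
    linarith
  have hrank : finrank ℂ V ≤ n := hN V hVneg
  have : finrank ℂ V = n + 1 := by
    rw [hV, finrank_span_eq_card hw.linearIndependent]
    simp
  omega

lemma isClosed_sup_of_finiteDimensional (G K : Submodule ℂ H) (hG : IsClosed (G : Set H))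
    [FiniteDimensional ℂ K] : IsClosed ((G ⊔ K : Submodule ℂ H) : Set H) := by
  haveI : IsClosed (G : Set H) := hG
  let π : H →L[ℂ] (H ⧸ G) := G.mkQ.mkContinuous 1
    (fun x => by simpa using Submodule.Quotient.norm_mk_le G x)
  haveI : FiniteDimensional ℂ (K.map G.mkQ) := Module.Finite.map K G.mkQ
  have hK' : IsClosed ((K.map G.mkQ : Submodule ℂ (H ⧸ G)) : Set (H ⧸ G)) :=
    Submodule.closed_of_finiteDimensional _
  have hset : ((G ⊔ K : Submodule ℂ H) : Set H) = ⇑π ⁻¹' (K.map G.mkQ : Set (H ⧸ G)) := by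
    ext x
    simp only [Set.mem_preimage, SetLike.mem_coe]
    constructor
    · intro hx
      obtain ⟨g, hg, k, hk, rfl⟩ := Submodule.mem_sup.mp hx
      refine ⟨k, hk, ?_⟩
      have h1 : π (g + k) = G.mkQ g + G.mkQ k := by simp [π]
      rw [h1]
      have hg0 : G.mkQ g = 0 := by simpa [Submodule.mkQ_apply, Submodule.Quotient.mk_eq_zero]
        using hg
      simp [hg0]
    · rintro ⟨k, hk, hkx⟩
      have hG' : k - x ∈ G := by
        have h2 : G.mkQ k = G.mkQ x := by simpa [π] using hkx
        simpa [Submodule.Quotient.eq] using (Submodule.Quotient.eq G).mp h2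
      refine Submodule.mem_sup.mpr ⟨x - k, ?_, k, hk, by abel⟩
      simpa using G.neg_mem hG'
  rw [hset]
  exact hK'.preimage π.continuous

/-- A self-adjoint operator whose "negative" subspaces (quadratic form below `s‖v‖²`)
have uniformly bounded dimension is Fredholm. -/
lemma isFredholm_of_bound (B : H →L[ℂ] H) (hB : IsSelfAdjoint B) {s : ℝ} (hs : 0 < s) (n : ℕ)
    (hN : ∀ V : Submodule ℂ H,
      (∀ v ∈ V, v ≠ 0 → ((inner ℂ (B v) v : ℂ)).re < s * ‖v‖ ^ 2) →
      FiniteDimensional ℂ V ∧ finrank ℂ V ≤ n) :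
    _root_.IsFredholm B := by
  -- the kernel is finite dimensional
  have hker : FiniteDimensional ℂ (LinearMap.ker (B : H →ₗ[ℂ] H)) := by
    refine (hN (LinearMap.ker (B : H →ₗ[ℂ] H)) ?_).1
    intro v hv hv0
    rw [LinearMap.mem_ker] at hv
    rw [show B v = 0 from hv]
    simp only [inner_zero_left, Complex.zero_re]
    have hnv : 0 < ‖v‖ := norm_pos_iff.mpr hv0
    positivity
  -- the range is closed
  obtain ⟨m, w, hw, c, hc, hbdd⟩ := exists_orthonormal_bddBelow B hs n (fun V hV => (hN V hV).2)
  set F : Submodule ℂ H := Submodule.span ℂ (Set.range w) with hF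
  haveI hFfin : FiniteDimensional ℂ F := FiniteDimensional.span_of_finite ℂ (Set.finite_range w)
  have horthF : ∀ u ∈ Fᗮ, ∀ i, (inner ℂ (w i) u : ℂ) = 0 := by
    intro u hu i
    exact (Submodule.mem_orthogonal F u).mp hu (w i)
      (Submodule.subset_span (Set.mem_range_self i))
  haveI : CompleteSpace Fᗮ := (Submodule.isClosed_orthogonal F).completeSpace_coe
  set g : Fᗮ →L[ℂ] H := B.comp (Submodule.subtypeL Fᗮ) with hg
  have hanti : AntilipschitzWith (⟨c, hc.le⟩ : NNReal)⁻¹ g := by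
    refine AntilipschitzWith.of_le_mul_dist fun x y => ?_
    simp only [dist_eq_norm]
    have hxy : (x : H) - y ∈ Fᗮ := Fᗮ.sub_mem x.2 y.2
    have h1 : c * ‖(x : H) - y‖ ≤ ‖B ((x : H) - y)‖ := by
      refine hbdd _ fun i => ?_
      exact (Submodule.mem_orthogonal F _).mp hxy (w i)
        (Submodule.subset_span (Set.mem_range_self i))
    have h2 : g x - g y = B ((x : H) - y) := by simp [hg, map_sub]
    have h3 : ‖x - y‖ = ‖(x : H) - y‖ := rfl
    rw [h2, h3]
    have h4 : (((⟨c, hc.le⟩ : NNReal)⁻¹ : NNReal) : ℝ) = c⁻¹ := NNReal.coe_inv _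
    refine le_trans ?_ (le_of_eq (congrArg (· * ‖B ((x : H) - y)‖) h4.symm))
    rw [inv_mul_eq_div, le_div_iff₀ hc]
    linarith
  have hclosed_g : IsClosed (Set.range g) := hanti.isClosed_range g.uniformContinuous
  have hrange_g : Set.range ⇑g = ⇑B '' (Fᗮ : Set H) := by
    have : ⇑g = ⇑B ∘ (Subtype.val : Fᗮ → H) := rfl
    rw [this, Set.range_comp, Subtype.range_coe]
  have hmap_closed : IsClosed ((Submodule.map (B : H →ₗ[ℂ] H) Fᗮ : Submodule ℂ H) : Set H) := by
    rw [Submodule.map_coe, ContinuousLinearMap.coe_coe, ← hrange_g]; exact hclosed_g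
  haveI : CompleteSpace F := FiniteDimensional.complete ℂ F
  have hsupF : F ⊔ Fᗮ = ⊤ := Submodule.sup_orthogonal_of_hasOrthogonalProjection
  have hrange_eq : LinearMap.range (B : H →ₗ[ℂ] H) = Submodule.map (B : H →ₗ[ℂ] H) Fᗮ ⊔ Submodule.map (B : H →ₗ[ℂ] H) F := by
    rw [LinearMap.range_eq_map, ← hsupF, Submodule.map_sup, sup_comm]
  haveI : FiniteDimensional ℂ (Submodule.map (B : H →ₗ[ℂ] H) F) := Module.Finite.map F (B : H →ₗ[ℂ] H)
  have hclosed : IsClosed ((LinearMap.range (B : H →ₗ[ℂ] H) : Submodule ℂ H) : Set H) := by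
    rw [hrange_eq]
    exact isClosed_sup_of_finiteDimensional _ _ hmap_closed
  -- the cokernel is finite dimensional
  refine ⟨hker, ?_⟩
  have hadj : ∀ x y : H, (inner ℂ (B x) y : ℂ) = inner ℂ x (B y) := fun x y => by
    conv_lhs => rw [← hB.adjoint_eq]
    exact ContinuousLinearMap.adjoint_inner_left B y x
  have horth : (LinearMap.range (B : H →ₗ[ℂ] H))ᗮ ≤ LinearMap.ker (B : H →ₗ[ℂ] H) := by
    intro u hu
    rw [LinearMap.mem_ker]
    have h1 : ∀ v : H, (inner ℂ v (B u) : ℂ) = 0 := by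
      intro v
      rw [← hadj]
      exact (Submodule.mem_orthogonal _ u).mp hu (B v) (LinearMap.mem_range_self _ v)
    have := h1 (B u)
    rwa [inner_self_eq_zero] at this
  have hrange_ge : (LinearMap.ker (B : H →ₗ[ℂ] H))ᗮ ≤ LinearMap.range (B : H →ₗ[ℂ] H) := by
    have h1 : (LinearMap.ker (B : H →ₗ[ℂ] H))ᗮ ≤ (LinearMap.range (B : H →ₗ[ℂ] H))ᗮᗮ := Submodule.orthogonal_le horth
    rwa [Submodule.orthogonal_orthogonal_eq_closure,
      hclosed.submodule_topologicalClosure_eq] at h1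
  haveI : CompleteSpace (LinearMap.ker (B : H →ₗ[ℂ] H)) := FiniteDimensional.complete ℂ _
  have hsup : LinearMap.ker (B : H →ₗ[ℂ] H) ⊔ (LinearMap.ker (B : H →ₗ[ℂ] H))ᗮ = ⊤ :=
    Submodule.sup_orthogonal_of_hasOrthogonalProjection
  set φ : (LinearMap.ker (B : H →ₗ[ℂ] H)) →ₗ[ℂ] (H ⧸ LinearMap.range (B : H →ₗ[ℂ] H)) :=
    (LinearMap.range (B : H →ₗ[ℂ] H)).mkQ.comp (LinearMap.ker (B : H →ₗ[ℂ] H)).subtype with hφ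
  have hsurj : Function.Surjective φ := by
    intro y
    obtain ⟨x, rfl⟩ := (LinearMap.range (B : H →ₗ[ℂ] H)).mkQ_surjective y
    have hx : x ∈ LinearMap.ker (B : H →ₗ[ℂ] H) ⊔ (LinearMap.ker (B : H →ₗ[ℂ] H))ᗮ := by rw [hsup]; trivial
    obtain ⟨k, hk, u, hu, hku⟩ := Submodule.mem_sup.mp hx
    refine ⟨⟨k, hk⟩, ?_⟩
    have : φ ⟨k, hk⟩ = (LinearMap.range (B : H →ₗ[ℂ] H)).mkQ k := rfl
    rw [this]
    rw [Submodule.mkQ_apply, Submodule.mkQ_apply, Submodule.Quotient.eq]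
    have : k - x = -u := by rw [← hku]; abel
    rw [this]
    exact (LinearMap.range (B : H →ₗ[ℂ] H)).neg_mem (hrange_ge hu)
  exact Module.Finite.of_surjective φ hsurj

lemma mem_of_path (t : ℝ) (ht0 : 0 ≤ t) (ht1 : t ≤ 1) (A : H →L[ℂ] H)
    (hA : IsSelfAdjoint A) (hAF : _root_.IsFredholm A) (hAP : EssentiallyPositive A) :
    IsSelfAdjoint (((1 - t : ℝ) : ℂ) • A + ((t : ℝ) : ℂ) • 1) ∧
    _root_.IsFredholm (((1 - t : ℝ) : ℂ) • A + ((t : ℝ) : ℂ) • 1) ∧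
    EssentiallyPositive (((1 - t : ℝ) : ℂ) • A + ((t : ℝ) : ℂ) • 1) := by
  obtain ⟨n, hn⟩ := hAP
  set B : H →L[ℂ] H := ((1 - t : ℝ) : ℂ) • A + ((t : ℝ) : ℂ) • 1 with hB
  have hBsa : IsSelfAdjoint B := by
    rw [IsSelfAdjoint] at hA ⊢
    rw [hB, star_add, star_smul, star_smul, hA, star_one]
    simp [Complex.star_def, Complex.conj_ofReal]
  have hquad : ∀ v : H,
      ((inner ℂ (B v) v : ℂ)).re = (1 - t) * ((inner ℂ (A v) v : ℂ)).re + t * ‖v‖ ^ 2 := by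
    intro v
    rw [hB]
    simp only [ContinuousLinearMap.add_apply, ContinuousLinearMap.smul_apply,
      ContinuousLinearMap.one_apply, inner_add_left, inner_smul_left, Complex.add_re,
      Complex.star_def, Complex.conj_ofReal]
    rw [Complex.re_ofReal_mul, Complex.re_ofReal_mul]
    have hvv : ((inner ℂ v v : ℂ)).re = ‖v‖ ^ 2 := by
      have := @inner_self_eq_norm_sq ℂ H _ _ _ v
      simpa [RCLike.re_to_complex] using this
    rw [hvv]
  refine ⟨hBsa, ?_, ?_⟩
  · -- Fredholm
    rcases ht0.lt_or_eq with htpos | ht0'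
    · refine isFredholm_of_bound B hBsa htpos n fun V hV => hn V fun v hv hv0 => ?_
      have h1 := hV v hv hv0
      rw [hquad v] at h1
      have hnv : 0 < ‖v‖ := norm_pos_iff.mpr hv0
      by_contra h2
      push_neg at h2
      nlinarith [mul_nonneg (sub_nonneg.mpr ht1) h2]
    · have : B = A := by
        rw [hB, ← ht0']
        push_cast
        simp
      rw [this]
      exact hAF
  · -- essentially positive
    refine ⟨n, fun V hV => hn V fun v hv hv0 => ?_⟩
    have h1 := hV v hv hv0
    rw [hquad v] at h1
    have hnv : 0 < ‖v‖ := norm_pos_iff.mpr hv0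
    by_contra h2
    push_neg at h2
    nlinarith [mul_nonneg (sub_nonneg.mpr ht1) h2, mul_nonneg ht0 (sq_nonneg ‖v‖)]

/-- The space `F̂₊` of essentially positive self-adjoint Fredholm operators on an
infinite-dimensional separable Hilbert space is contractible in the norm topology. -/
theorem contractible_essentially_positive
    [TopologicalSpace.SeparableSpace H] (hinf : ¬ FiniteDimensional ℂ H) :
    ContractibleSpace
      {A : H →L[ℂ] H // IsSelfAdjoint A ∧ _root_.IsFredholm A ∧ EssentiallyPositive A} := by
  have h1 : IsSelfAdjoint (1 : H →L[ℂ] H) ∧ _root_.IsFredholm (1 : H →L[ℂ] H) ∧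
      EssentiallyPositive (1 : H →L[ℂ] H) := by
    refine ⟨?_, ⟨?_, ?_⟩, ?_⟩
    · rw [IsSelfAdjoint]; exact star_one _
    · have hk : LinearMap.ker ((1 : H →L[ℂ] H) : H →ₗ[ℂ] H) = ⊥ := by
        ext x; simp [LinearMap.mem_ker]
      rw [hk]; infer_instance
    · have hr : LinearMap.range ((1 : H →L[ℂ] H) : H →ₗ[ℂ] H) = ⊤ := by
        rw [LinearMap.range_eq_top]; exact fun x => ⟨x, rfl⟩
      rw [hr]
      haveI : Subsingleton (H ⧸ (⊤ : Submodule ℂ H)) :=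
        Submodule.Quotient.subsingleton_iff.mpr rfl
      infer_instance
    · refine ⟨0, fun V hV => ?_⟩
      have hVbot : V = ⊥ := by
        rw [Submodule.eq_bot_iff]
        intro v hv
        by_contra h0
        have h2 := hV v hv h0
        rw [ContinuousLinearMap.one_apply] at h2
        have hvv : ((inner ℂ v v : ℂ)).re = ‖v‖ ^ 2 := by
          have := @inner_self_eq_norm_sq ℂ H _ _ _ v
          simpa [RCLike.re_to_complex] using this
        rw [hvv] at h2
        have : 0 < ‖v‖ := norm_pos_iff.mpr h0
        nlinarith
      rw [hVbot]
      exact ⟨inferInstance, by simp⟩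
  rw [contractible_iff_id_nullhomotopic]
  refine ⟨⟨1, h1⟩, ⟨?_⟩⟩
  refine ⟨⟨fun p =>
      ⟨((1 - (p.1 : ℝ) : ℝ) : ℂ) • (p.2 : {A : H →L[ℂ] H // _}).1 + (((p.1 : ℝ)) : ℂ) • 1,
        mem_of_path (p.1 : ℝ) p.1.2.1 p.1.2.2 p.2.1 p.2.2.1 p.2.2.2.1 p.2.2.2.2⟩, ?_⟩,
    ?_, ?_⟩
  · apply Continuous.subtype_mk
    fun_prop
  · intro x
    apply Subtype.ext
    simp
  · intro x
    apply Subtype.ext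
    simp
end
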